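/- Let G be a finite abelian group and k ∈ ℕ. Then D_k(G) = 1 + d_k(G). -/

import Mathlib

/-- `S` is a zero-sum sequence over the additive abelian group `G`. -/
def IsZeroSum {G : Type*} [AddCommGroup G] (S : Multiset G) : Prop :=
  S.sum = 0

/-- `S` is divisible in `F(G)` by a concatenation of `k` nontrivial zero-sum sequences. -/
def ZDividesKSums {G : Type*} [AddCommGroup G] (k : ℕ) (S : Multiset G) : Prop :=
  ∃ f : Fin k → Multiset G,
    (∀ i, f i ≠ 0 ∧ IsZeroSum (f i)) ∧ (∑ i, f i) ≤ S

/-- The small `k`-th Davenport constant `d_k(G)` of an additive abelian group. -/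
noncomputable def zsmalldk (G : Type*) [AddCommGroup G] (k : ℕ) : ℕ :=
  sSup {n : ℕ | ∃ S : Multiset G, ¬ ZDividesKSums k S ∧ Multiset.card S = n}

-- pigeonhole lemma
lemma exists_zero_sub {G : Type*} [AddCommGroup G] [Fintype G] (S : Multiset G)
    (h : Fintype.card G ≤ Multiset.card S) :
    ∃ T : Multiset G, T ≤ S ∧ T ≠ 0 ∧ T.sum = 0 ∧ Multiset.card T ≤ Fintype.card G := by
  set n := Fintype.card G with hn
  set L := S.toList with hL
  have hlen : L.length = Multiset.card S := Multiset.length_toList S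
  obtain ⟨i, j, hne, heq⟩ := Fintype.exists_ne_map_eq_of_card_lt
    (fun i : Fin (n+1) => (L.take i).sum) (by simp; exact le_rfl)
  wlog hij : (i : ℕ) < (j : ℕ) generalizing i j
  · exact this j i hne.symm heq.symm (by omega)
  set T : List G := (L.drop i).take (j - i) with hT
  have hjlen : (j : ℕ) ≤ L.length := by
    have := j.isLt; omega
  have hsplit : L.take j = L.take i ++ T := by
    rw [hT, ← List.take_add]
    congr 1; omega
  have hTlen : T.length = (j : ℕ) - i := by
    rw [hT, List.length_take, List.length_drop]; omega
  refine ⟨(T : Multiset G), ?_, ?_, ?_, ?_⟩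
  · have hsub : List.Sublist T L :=
      (List.take_sublist _ _).trans (List.drop_sublist _ _)
    have : (T : Multiset G) ≤ (L : Multiset G) := hsub.subperm
    rwa [hL, Multiset.coe_toList] at this
  · simp only [ne_eq, Multiset.coe_eq_zero]
    intro h0
    rw [h0] at hTlen
    simp at hTlen; omega
  · have h2 := heq
    rw [hsplit, List.sum_append] at h2
    have h3 : T.sum = 0 := by
      have := left_eq_add.mp h2
      exact this
    simpa using h3
  · rw [Multiset.coe_card, hTlen]
    have := j.isLt; omega

lemma divides_of_big {G : Type*} [AddCommGroup G] [Fintype G] (k : ℕ) (S : Multiset G)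
    (h : k * Fintype.card G ≤ Multiset.card S) : ZDividesKSums k S := by
  have _inst : DecidableEq G := Classical.decEq G
  classical
  induction k generalizing S with
  | zero => exact ⟨Fin.elim0, fun i => i.elim0, by simp⟩
  | succ k ih =>
    have hpos : 0 < Fintype.card G := Fintype.card_pos
    have hn : Fintype.card G ≤ Multiset.card S := by nlinarith
    obtain ⟨T, hTS, hT0, hTsum, hTc⟩ := exists_zero_sub S hn
    have h2 : k * Fintype.card G ≤ Multiset.card (S - T) := by
      rw [Multiset.card_sub hTS]
      have h1 := Multiset.card_le_card hTS
      have h3 : (k+1) * Fintype.card G = k * Fintype.card G + Fintype.card G := by ring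
      omega
    obtain ⟨f, hf, hfle⟩ := ih (S - T) h2
    refine ⟨Fin.cons T f, ?_, ?_⟩
    · intro i
      refine Fin.cases ?_ ?_ i
      · exact ⟨hT0, hTsum⟩
      · intro j; simpa using hf j
    · rw [Fin.sum_cons]
      calc T + ∑ i, f i ≤ T + (S - T) := add_le_add (le_refl T) hfle
        _ = S := by rw [add_comm]; exact tsub_add_cancel_of_le hTS

lemma sum_multiset_sum {ι M : Type*} [AddCommMonoid M] (s : Finset ι) (f : ι → Multiset M) :
    (∑ i ∈ s, f i).sum = ∑ i ∈ s, (f i).sum := by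
  classical
  induction s using Finset.induction with
  | empty => simp
  | insert _ _ h ih => simp [Finset.sum_insert h, ih]

lemma decomp {G : Type*} [AddCommGroup G] [Fintype G] :
    ∀ N (S : Multiset G), Multiset.card S ≤ N → S ≠ 0 → S.sum = 0 →
    ∃ (m : ℕ) (f : Fin m → Multiset G), (∀ i, f i ≠ 0 ∧ IsZeroSum (f i)) ∧ (∑ i, f i) = S ∧
      Multiset.card S ≤ m * Fintype.card G := by
  classical
  intro N
  induction N with
  | zero => intro S hc h0 _; exact absurd (Multiset.card_eq_zero.mp (by omega)) h0
  | succ N ih =>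
    intro S hc h0 hsum
    by_cases hsmall : Multiset.card S ≤ Fintype.card G
    · exact ⟨1, fun _ => S, fun _ => ⟨h0, hsum⟩, by simp, by simpa using hsmall⟩
    · push_neg at hsmall
      obtain ⟨T, hTS, hT0, hTsum, hTc⟩ := exists_zero_sub S (le_of_lt hsmall)
      have hTcpos : 0 < Multiset.card T := Multiset.card_pos.mpr hT0
      have hcard : Multiset.card (S - T) = Multiset.card S - Multiset.card T :=
        Multiset.card_sub hTS
      have hST : (S - T) + T = S := tsub_add_cancel_of_le hTS
      have hs0 : (S - T).sum = 0 := by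
        have : (S - T).sum + T.sum = S.sum := by rw [← Multiset.sum_add, hST]
        rw [hTsum, hsum] at this; simpa using this
      have hne : S - T ≠ 0 := by
        intro h; rw [h] at hcard
        simp at hcard; omega
      obtain ⟨m, f, hf, hfsum, hfc⟩ := ih (S - T) (by omega) hne hs0
      refine ⟨m + 1, Fin.cons T f, ?_, ?_, ?_⟩
      · intro i
        refine Fin.cases ?_ ?_ i
        · exact ⟨hT0, hTsum⟩
        · intro j; simpa using hf j
      · rw [Fin.sum_cons, hfsum, add_comm]; exact hST
      · have : (m + 1) * Fintype.card G = m * Fintype.card G + Fintype.card G := by ring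
        omega

lemma zdiv_of_finset {G : Type*} [AddCommGroup G] {ι : Type*} {k : ℕ} {S : Multiset G}
    (t : Finset ι) (f : ι → Multiset G) (hcard : k ≤ t.card)
    (hf : ∀ i ∈ t, f i ≠ 0 ∧ IsZeroSum (f i)) (hle : ∑ i ∈ t, f i ≤ S) :
    ZDividesKSums k S := by
  classical
  obtain ⟨u, hut, hu⟩ := Finset.exists_subset_card_eq hcard
  let e : ↥u ≃ Fin k := u.equivFin.trans (finCongr hu)
  refine ⟨fun j => f (e.symm j : ι), ?_, ?_⟩
  · intro j
    exact hf _ (hut (e.symm j).2)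
  · have h1 : ∑ j, f ((e.symm j : ↥u) : ι) = ∑ x : ↥u, f (x : ι) :=
      Equiv.sum_comp e.symm (fun x : ↥u => f (x : ι))
    rw [h1]
    rw [Finset.sum_coe_sort u f]
    exact le_trans (Finset.sum_le_sum_of_subset hut) hle

/-- Every factorization of `S` into nontrivial zero-sum sequences has at most `k` factors. -/
def ZMaxFactLe {G : Type*} [AddCommGroup G] (k : ℕ) (S : Multiset G) : Prop :=
  ∀ (m : ℕ) (f : Fin m → Multiset G),
    (∀ i, f i ≠ 0 ∧ IsZeroSum (f i)) → (∑ i, f i) = S → m ≤ k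

/-- The large `k`-th Davenport constant `D_k(G)` of an additive abelian group. -/
noncomputable def zlargeDk (G : Type*) [AddCommGroup G] (k : ℕ) : ℕ :=
  sSup {n : ℕ | ∃ S : Multiset G, IsZeroSum S ∧ ZMaxFactLe k S ∧ Multiset.card S = n}

/-- For a finite abelian group `G` and `k ≥ 1`, `D_k(G) = 1 + d_k(G)`. -/
theorem stmt16 {G : Type*} [AddCommGroup G] [Finite G] (k : ℕ) (hk : 1 ≤ k) :
    zlargeDk G k = 1 + zsmalldk G k := by
  classical
  haveI := Fintype.ofFinite G
  rw [zlargeDk, zsmalldk]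
  have hAub : ∀ a ∈ {n : ℕ | ∃ S : Multiset G, ¬ ZDividesKSums k S ∧ Multiset.card S = n},
      a ≤ k * Fintype.card G := by
    rintro a ⟨S, hS, rfl⟩
    by_contra hcon
    exact hS (divides_of_big k S (by omega))
  have hBub : ∀ b ∈ {n : ℕ | ∃ S : Multiset G, IsZeroSum S ∧ ZMaxFactLe k S ∧
      Multiset.card S = n}, b ≤ k * Fintype.card G := by
    rintro b ⟨S, hzs, hmax, rfl⟩
    by_cases h0 : S = 0
    · simp [h0]
    · obtain ⟨m, f, hf, hfs, hfc⟩ := decomp (Multiset.card S) S le_rfl h0 hzs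
      exact hfc.trans (Nat.mul_le_mul_right _ (hmax m f hf hfs))
  have hAne : ({n : ℕ | ∃ S : Multiset G, ¬ ZDividesKSums k S ∧
      Multiset.card S = n}).Nonempty := by
    refine ⟨0, 0, ?_, by simp⟩
    rintro ⟨f, hf, hle⟩
    have hi : f ⟨0, hk⟩ ≤ ∑ i, f i :=
      Finset.single_le_sum (fun i _ => Multiset.zero_le (f i)) (Finset.mem_univ _)
    exact (hf ⟨0, hk⟩).1 (le_antisymm (le_trans hi hle) (Multiset.zero_le _))
  have hzero_max : ZMaxFactLe k (0 : Multiset G) := by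
    intro m f hf hsum
    by_contra hcon
    push_neg at hcon
    have hi : f ⟨0, by omega⟩ ≤ ∑ i, f i :=
      Finset.single_le_sum (fun i _ => Multiset.zero_le (f i)) (Finset.mem_univ _)
    rw [hsum] at hi
    exact (hf ⟨0, by omega⟩).1 (le_antisymm hi (Multiset.zero_le _))
  have hBne : ({n : ℕ | ∃ S : Multiset G, IsZeroSum S ∧ ZMaxFactLe k S ∧
      Multiset.card S = n}).Nonempty :=
    ⟨0, 0, by simp [IsZeroSum], hzero_max, by simp⟩
  have hAbdd : BddAbove {n : ℕ | ∃ S : Multiset G, ¬ ZDividesKSums k S ∧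
      Multiset.card S = n} := ⟨_, hAub⟩
  have hBbdd : BddAbove {n : ℕ | ∃ S : Multiset G, IsZeroSum S ∧ ZMaxFactLe k S ∧
      Multiset.card S = n} := ⟨_, hBub⟩
  obtain ⟨S, hS, hcS⟩ := Nat.sSup_mem hAne hAbdd
  obtain ⟨Sd, hSd0, hSdmax, hcSd⟩ := Nat.sSup_mem hBne hBbdd
  -- direction ≥ : the sequence (-σ(S)) ::ₘ S is zero-sum with max factorization length ≤ k
  have hge : 1 + sSup {n : ℕ | ∃ S : Multiset G, ¬ ZDividesKSums k S ∧ Multiset.card S = n}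
      ≤ sSup {n : ℕ | ∃ S : Multiset G, IsZeroSum S ∧ ZMaxFactLe k S ∧
        Multiset.card S = n} := by
    refine le_csSup hBbdd ⟨(-(S.sum)) ::ₘ S, ?_, ?_, ?_⟩
    · simp [IsZeroSum]
    · intro m f hf hsum
      by_contra hcon
      push_neg at hcon
      have hg : (-(S.sum)) ∈ ∑ i, f i := by
        rw [hsum]; exact Multiset.mem_cons_self _ _
      obtain ⟨i0, -, hi0⟩ := Multiset.mem_sum.mp hg
      apply hS
      refine zdiv_of_finset (Finset.univ.erase i0) f ?_ (fun i _ => hf i) ?_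
      · rw [Finset.card_erase_of_mem (Finset.mem_univ _), Finset.card_univ,
          Fintype.card_fin]
        omega
      · have hsplit : f i0 + ∑ i ∈ Finset.univ.erase i0, f i = ∑ i, f i :=
          Finset.add_sum_erase _ f (Finset.mem_univ _)
        obtain ⟨R, hR⟩ := Multiset.le_iff_exists_add.mp (Multiset.singleton_le.mpr hi0)
        rw [hR, hsum] at hsplit
        have hcancel : R + ∑ i ∈ Finset.univ.erase i0, f i = S := by
          have h2 : {-(S.sum)} + (R + ∑ i ∈ Finset.univ.erase i0, f i)
              = {-(S.sum)} + S := by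
            rw [← add_assoc, hsplit, Multiset.singleton_add]
          exact add_left_cancel h2
        calc ∑ i ∈ Finset.univ.erase i0, f i
            ≤ R + ∑ i ∈ Finset.univ.erase i0, f i := le_add_self
          _ = S := hcancel
    · rw [Multiset.card_cons, hcS, add_comm]
  -- direction ≤
  have hle : sSup {n : ℕ | ∃ S : Multiset G, IsZeroSum S ∧ ZMaxFactLe k S ∧
      Multiset.card S = n}
      ≤ 1 + sSup {n : ℕ | ∃ S : Multiset G, ¬ ZDividesKSums k S ∧ Multiset.card S = n} := by
    by_cases h0 : Sd = 0
    · rw [← hcSd, h0]; simp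
    · obtain ⟨g, hg⟩ := Multiset.exists_mem_of_ne_zero h0
      have hmem : Multiset.card Sd - 1 ∈ {n : ℕ | ∃ S : Multiset G, ¬ ZDividesKSums k S ∧
          Multiset.card S = n} := by
        refine ⟨Sd.erase g, ?_, by rw [Multiset.card_erase_of_mem hg]; rfl⟩
        rintro ⟨f, hf, hfle⟩
        have hle2 : ∑ i, f i + {g} ≤ Sd := by
          have : g ::ₘ ∑ i, f i ≤ g ::ₘ Sd.erase g := Multiset.cons_le_cons _ hfle
          rw [Multiset.cons_erase hg] at this
          rw [add_comm, Multiset.singleton_add]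
          exact this
        have hfleS : ∑ i, f i ≤ Sd := le_trans (le_add_self.trans_eq (add_comm _ _)) hle2
        have hRg : ({g} : Multiset G) ≤ Sd - ∑ i, f i := le_tsub_of_add_le_left hle2
        have hRne : Sd - ∑ i, f i ≠ 0 := fun h => by
          rw [h] at hRg; exact (Multiset.singleton_ne_zero g) (le_antisymm hRg (Multiset.zero_le _))
        have hRsum : (Sd - ∑ i, f i).sum = 0 := by
          have hsplit : (Sd - ∑ i, f i) + ∑ i, f i = Sd := tsub_add_cancel_of_le hfleS
          have h2 : (Sd - ∑ i, f i).sum + (∑ i, f i).sum = Sd.sum := by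
            rw [← Multiset.sum_add, hsplit]
          have h3 : (∑ i, f i).sum = 0 := by
            rw [sum_multiset_sum]
            exact Finset.sum_eq_zero (fun i _ => (hf i).2)
          rw [h3, hSd0] at h2
          simpa using h2
        have hcon := hSdmax (k + 1) (Fin.cons (Sd - ∑ i, f i) f) ?_ ?_
        · omega
        · intro i
          refine Fin.cases ?_ ?_ i
          · exact ⟨hRne, hRsum⟩
          · intro j; simpa using hf j
        · rw [Fin.sum_cons]
          exact tsub_add_cancel_of_le hfleS
      have h1 : Multiset.card Sd - 1 ≤ sSup {n : ℕ | ∃ S : Multiset G, ¬ ZDividesKSums k S ∧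
          Multiset.card S = n} := le_csSup hAbdd hmem
      have h2 : 1 ≤ Multiset.card Sd := by
        rw [Nat.one_le_iff_ne_zero]
        simpa [Multiset.card_eq_zero] using h0
      omega
  omega
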